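/- arXiv:2203.02614 — 2 statements merged into one kernel-verified Lean document; each statement's English description precedes it below -/
import Mathlib

section
/- Monotonicity of the forgetting process in its initial set: if the process is run with the same input sequence x_1,...,x_n from initial sets T_1 and T_1 ∪ T_2 (with T_1, T_2 disjoint finite subsets of [0,1]), then at every time ℓ ≤ n and for every x ∈ [0,1], the set of elements in [0,x] present in the memory of the first process is contained in that of the second process, and the difference of their cardinalities is at most |T_2|. -/
open MeasureTheory ProbabilityTheory Finset

noncomputable section

/-- One step of the forgetting process: the new point `x` joins `S`; if `x` is strictly
larger than the current minimum of `S`, that minimum is removed. -/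
def forgetStep (S : Finset ℝ) (x : ℝ) : Finset ℝ :=
  if h : S.Nonempty then
    if S.min' h < x then insert x (S.erase (S.min' h)) else insert x S
  else insert x S

/-- The memory after `n` steps, starting from the set `T`, with inputs `xs 0, xs 1, …`. -/
def forgetMem (T : Finset ℝ) (xs : ℕ → ℝ) : ℕ → Finset ℝ
  | 0 => T
  | n + 1 => forgetStep (forgetMem T xs n) (xs n)

/-- `sCount xs x ℓ` : number of elements of the memory lying in `[0, x]` after `ℓ` steps,
starting from `S = {0}`. -/
def sCount (xs : ℕ → ℝ) (x : ℝ) (ℓ : ℕ) : ℕ :=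
  ((forgetMem {0} xs ℓ).filter (· ≤ x)).card

/-- The branching weight `W(z,n) = Σ_{x ∈ S(z,n)} 1/(1-x)`, the sum over memory elements
strictly below `z` at time `n`. -/
def Wproc (xs : ℕ → ℝ) (z : ℝ) (n : ℕ) : ℝ :=
  ∑ x ∈ (forgetMem {0} xs n).filter (· < z), 1 / (1 - x)

/-- `Z(z,n) = Σ_{k=1}^n W(z,k)·1{W(z,k-1)=0}`. -/
def Zproc (xs : ℕ → ℝ) (z : ℝ) (n : ℕ) : ℝ :=
  ∑ k ∈ Finset.range n, if Wproc xs z k = 0 then Wproc xs z (k + 1) else 0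

/-- `X(z,n) = W(z,n) - Z(z,n)`. -/
def Xproc (xs : ℕ → ℝ) (z : ℝ) (n : ℕ) : ℝ :=
  Wproc xs z n - Zproc xs z n

/-- the minimum of the memory at time `n` (with junk value `0` if the memory were empty). -/
def mminProc (xs : ℕ → ℝ) (n : ℕ) : ℝ :=
  WithTop.untopD 0 (forgetMem {0} xs n).min

/-- the critical point `z₀ = 1 - 1/e`. -/
def critPoint : ℝ := 1 - (Real.exp 1)⁻¹

/-- The σ-algebra generated by the first `n` inputs `X 0, …, X (n-1)`. -/
def natSigma {Ω : Type*} [MeasurableSpace Ω] (X : ℕ → Ω → ℝ) (n : ℕ) : MeasurableSpace Ω :=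
  ⨆ i ∈ Finset.range n, MeasurableSpace.comap (X i) inferInstance

/-- The natural filtration `F_n = σ(x_1, …, x_n)` of the input sequence. -/
def natFilt {Ω : Type*} [m0 : MeasurableSpace Ω] (X : ℕ → Ω → ℝ)
    (hX : ∀ i, Measurable (X i)) : Filtration ℕ m0 where
  seq n := natSigma X n
  mono' n m hnm := biSup_mono fun i hi => Finset.mem_range.2 ((Finset.mem_range.1 hi).trans_le hnm)
  le' n := iSup₂_le fun i _ => measurable_iff_comap_le.1 (hX i)

/-- The input sequence is i.i.d. uniform on `[0,1]`. -/
def IsUnifIID {Ω : Type*} [MeasurableSpace Ω] (μ : Measure Ω) (X : ℕ → Ω → ℝ) : Prop :=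
  (∀ i, Measurable (X i)) ∧
    iIndepFun X μ ∧
    ∀ i, Measure.map (X i) μ = volume.restrict (Set.Icc (0 : ℝ) 1)

end

lemma forgetStep_subset {S₁ S₂ : Finset ℝ} (h : S₁ ⊆ S₂) (x : ℝ) :
    forgetStep S₁ x ⊆ forgetStep S₂ x := by
  unfold forgetStep
  by_cases h₁ : S₁.Nonempty
  · have h₂ : S₂.Nonempty := h₁.mono h
    have hm : S₂.min' h₂ ≤ S₁.min' h₁ :=
      Finset.min'_le _ _ (h (Finset.min'_mem _ h₁))
    rw [dif_pos h₁, dif_pos h₂]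
    by_cases hx₁ : S₁.min' h₁ < x
    · rw [if_pos hx₁, if_pos (lt_of_le_of_lt hm hx₁)]
      intro a ha
      rcases Finset.mem_insert.1 ha with rfl | ha
      · exact Finset.mem_insert_self _ _
      · rcases Finset.mem_erase.1 ha with ⟨hne, haS⟩
        refine Finset.mem_insert_of_mem (Finset.mem_erase.2 ⟨?_, h haS⟩)
        intro heq
        exact hne (le_antisymm (heq ▸ hm) (Finset.min'_le _ _ haS))
    · rw [if_neg hx₁]
      push_neg at hx₁
      by_cases hx₂ : S₂.min' h₂ < x
      · rw [if_pos hx₂]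
        intro a ha
        rcases Finset.mem_insert.1 ha with rfl | ha
        · exact Finset.mem_insert_self _ _
        · refine Finset.mem_insert_of_mem (Finset.mem_erase.2 ⟨?_, h ha⟩)
          intro heq
          have : x ≤ a := hx₁.trans (Finset.min'_le _ _ ha)
          exact absurd (heq ▸ hx₂) (not_lt.2 this)
      · rw [if_neg hx₂]
        exact Finset.insert_subset_insert _ h
  · rw [dif_neg h₁]
    rw [Finset.not_nonempty_iff_eq_empty] at h₁
    subst h₁
    by_cases h₂ : S₂.Nonempty
    · rw [dif_pos h₂]
      by_cases hx₂ : S₂.min' h₂ < x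
      · rw [if_pos hx₂]
        simp
      · rw [if_neg hx₂]
        simp
    · rw [dif_neg h₂]
      rw [Finset.not_nonempty_iff_eq_empty] at h₂
      subst h₂
      exact subset_rfl

lemma forgetStep_card {S₁ S₂ : Finset ℝ} (h : S₁ ⊆ S₂) {d : ℕ}
    (hc : S₂.card ≤ S₁.card + d) (x : ℝ) :
    (forgetStep S₂ x).card ≤ (forgetStep S₁ x).card + d := by
  unfold forgetStep
  by_cases h₁ : S₁.Nonempty
  · have h₂ : S₂.Nonempty := h₁.mono h
    have hm : S₂.min' h₂ ≤ S₁.min' h₁ :=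
      Finset.min'_le _ _ (h (Finset.min'_mem _ h₁))
    have hc₁ : 1 ≤ S₁.card := Finset.card_pos.2 h₁
    rw [dif_pos h₁, dif_pos h₂]
    by_cases hx₁ : S₁.min' h₁ < x
    · rw [if_pos hx₁, if_pos (lt_of_le_of_lt hm hx₁)]
      have he₁ : (S₁.erase (S₁.min' h₁)).card = S₁.card - 1 :=
        Finset.card_erase_of_mem (Finset.min'_mem _ h₁)
      have he₂ : (S₂.erase (S₂.min' h₂)).card = S₂.card - 1 :=
        Finset.card_erase_of_mem (Finset.min'_mem _ h₂)
      have hsub : S₁.erase (S₁.min' h₁) ⊆ S₂.erase (S₂.min' h₂) := by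
        intro a ha
        rcases Finset.mem_erase.1 ha with ⟨hne, haS⟩
        refine Finset.mem_erase.2 ⟨?_, h haS⟩
        intro heq
        exact hne (le_antisymm (heq ▸ hm) (Finset.min'_le _ _ haS))
      by_cases hxm : x ∈ S₂.erase (S₂.min' h₂)
      · rw [Finset.card_insert_of_mem hxm]
        have := Finset.card_le_card (Finset.subset_insert x (S₁.erase (S₁.min' h₁)))
        omega
      · rw [Finset.card_insert_of_notMem hxm,
          Finset.card_insert_of_notMem (fun hx => hxm (hsub hx))]
        omega
    · rw [if_neg hx₁]
      have hcard₁ : S₁.card ≤ (insert x S₁).card :=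
        Finset.card_le_card (Finset.subset_insert _ _)
      by_cases hx₂ : S₂.min' h₂ < x
      · rw [if_pos hx₂]
        have he₂ : (S₂.erase (S₂.min' h₂)).card = S₂.card - 1 :=
          Finset.card_erase_of_mem (Finset.min'_mem _ h₂)
        have := Finset.card_insert_le x (S₂.erase (S₂.min' h₂))
        have hc₂ : 1 ≤ S₂.card := Finset.card_pos.2 h₂
        omega
      · rw [if_neg hx₂]
        by_cases hxS₁ : x ∈ S₁
        · rw [Finset.card_insert_of_mem hxS₁, Finset.card_insert_of_mem (h hxS₁)]
          exact hc
        · rw [Finset.card_insert_of_notMem hxS₁]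
          have := Finset.card_insert_le x S₂
          omega
  · rw [dif_neg h₁]
    rw [Finset.not_nonempty_iff_eq_empty] at h₁
    subst h₁
    simp only [Finset.card_empty, zero_add] at hc
    have hx1 : ({x} : Finset ℝ).card = 1 := Finset.card_singleton x
    by_cases h₂ : S₂.Nonempty
    · rw [dif_pos h₂]
      have hc₂ : 1 ≤ S₂.card := Finset.card_pos.2 h₂
      by_cases hx₂ : S₂.min' h₂ < x
      · rw [if_pos hx₂]
        have he₂ : (S₂.erase (S₂.min' h₂)).card = S₂.card - 1 :=
          Finset.card_erase_of_mem (Finset.min'_mem _ h₂)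
        have := Finset.card_insert_le x (S₂.erase (S₂.min' h₂))
        have hi : (insert x (∅ : Finset ℝ)).card = 1 := by simp
        omega
      · rw [if_neg hx₂]
        have := Finset.card_insert_le x S₂
        have hi : (insert x (∅ : Finset ℝ)).card = 1 := by simp
        omega
    · rw [dif_neg h₂]
      rw [Finset.not_nonempty_iff_eq_empty] at h₂
      subst h₂
      omega

lemma forgetMem_invariant (T₁ T₂ : Finset ℝ) (hdisj : Disjoint T₁ T₂)
    (xs : ℕ → ℝ) (ℓ : ℕ) :
    forgetMem T₁ xs ℓ ⊆ forgetMem (T₁ ∪ T₂) xs ℓ ∧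
      (forgetMem (T₁ ∪ T₂) xs ℓ).card ≤ (forgetMem T₁ xs ℓ).card + T₂.card := by
  induction ℓ with
  | zero =>
    refine ⟨Finset.subset_union_left, ?_⟩
    show (T₁ ∪ T₂).card ≤ T₁.card + T₂.card
    rw [Finset.card_union_of_disjoint hdisj]
  | succ k ih =>
    exact ⟨forgetStep_subset ih.1 _, forgetStep_card ih.1 ih.2 _⟩

/-- Monotonicity of the forgetting process in its initial set: running the
process with the same inputs from `T₁` and from `T₁ ∪ T₂` (disjoint finite subsets of
`[0,1]`), at every time `ℓ ≤ n` and every `x ∈ [0,1]` the memory elements in `[0,x]` of the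
first process form a subset of those of the second, and the cardinalities differ by at most
`|T₂|`. -/
theorem forgetting_monotone_initial_set (T₁ T₂ : Finset ℝ) (hdisj : Disjoint T₁ T₂)
    (hT₁ : ↑T₁ ⊆ Set.Icc (0 : ℝ) 1) (hT₂ : ↑T₂ ⊆ Set.Icc (0 : ℝ) 1)
    (xs : ℕ → ℝ) (hxs : ∀ k, xs k ∈ Set.Icc (0 : ℝ) 1)
    (n ℓ : ℕ) (hℓ : ℓ ≤ n) (x : ℝ) (hx : x ∈ Set.Icc (0 : ℝ) 1) :
    (forgetMem T₁ xs ℓ).filter (· ≤ x) ⊆ (forgetMem (T₁ ∪ T₂) xs ℓ).filter (· ≤ x) ∧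
      ((forgetMem (T₁ ∪ T₂) xs ℓ).filter (· ≤ x)).card
        - ((forgetMem T₁ xs ℓ).filter (· ≤ x)).card ≤ T₂.card := by
  obtain ⟨hsub, hcard⟩ := forgetMem_invariant T₁ T₂ hdisj xs ℓ
  refine ⟨Finset.filter_subset_filter _ hsub, ?_⟩
  have h1 : (forgetMem (T₁ ∪ T₂) xs ℓ).filter (· ≤ x) ⊆
      (forgetMem T₁ xs ℓ).filter (· ≤ x) ∪ (forgetMem (T₁ ∪ T₂) xs ℓ \ forgetMem T₁ xs ℓ) := by
    intro a ha
    rcases Finset.mem_filter.1 ha with ⟨haS, hax⟩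
    by_cases haS₁ : a ∈ forgetMem T₁ xs ℓ
    · exact Finset.mem_union_left _ (Finset.mem_filter.2 ⟨haS₁, hax⟩)
    · exact Finset.mem_union_right _ (Finset.mem_sdiff.2 ⟨haS, haS₁⟩)
  have h2 := (Finset.card_le_card h1).trans (Finset.card_union_le _ _)
  have h3 : (forgetMem (T₁ ∪ T₂) xs ℓ \ forgetMem T₁ xs ℓ).card =
      (forgetMem (T₁ ∪ T₂) xs ℓ).card - (forgetMem T₁ xs ℓ).card :=
    Finset.card_sdiff_of_subset hsub
  have h4 := Finset.card_le_card hsub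
  omega
end

section
/- The expected count of memory elements below any threshold is subadditive in time: for every x ∈ [0,1], the function f(ℓ) = E[s(x,ℓ)] satisfies f(p+q) ≤ f(p) + f(q) for all nonnegative integers p, q. -/
open MeasureTheory ProbabilityTheory Finset

section Det

/-- count of elements `≤ x` -/
noncomputable def cntf (x : ℝ) (S : Finset ℝ) : ℕ := (S.filter (fun t => t ≤ x)).card

variable {x y : ℝ}

lemma forgetStep_nonempty (S : Finset ℝ) (y : ℝ) : (forgetStep S y).Nonempty := by
  unfold forgetStep; split_ifs <;> exact Finset.insert_nonempty _ _

lemma forgetMem_nonempty (T : Finset ℝ) (hT : T.Nonempty) (xs : ℕ → ℝ) (n : ℕ) :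
    (forgetMem T xs n).Nonempty := by
  cases n with
  | zero => exact hT
  | succ n => exact forgetStep_nonempty _ _

lemma forgetStep_eq (S : Finset ℝ) (h : S.Nonempty) (y : ℝ) :
    forgetStep S y =
      if S.min' h < y then insert y (S.erase (S.min' h)) else insert y S := by
  simp [forgetStep, h]

lemma cnt_mono {S U : Finset ℝ} (h : S ⊆ U) : cntf x S ≤ cntf x U :=
  Finset.card_le_card (Finset.filter_subset_filter _ h)

lemma cnt_insert_le (S : Finset ℝ) (y : ℝ) :
    cntf x (insert y S) ≤ cntf x S + if y ≤ x then 1 else 0 := by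
  unfold cntf
  rw [Finset.filter_insert]
  split_ifs
  · exact Finset.card_insert_le _ _
  · omega

lemma cnt_insert_not_mem {S : Finset ℝ} (h : y ∉ S) :
    cntf x (insert y S) = cntf x S + if y ≤ x then 1 else 0 := by
  unfold cntf
  rw [Finset.filter_insert]
  split_ifs
  · exact Finset.card_insert_of_notMem fun hc => h (Finset.mem_of_mem_filter _ hc)
  · omega

lemma cnt_insert_mem {S : Finset ℝ} (h : y ∈ S) :
    cntf x (insert y S) = cntf x S := by
  rw [Finset.insert_eq_self.2 h]

lemma cnt_erase {S : Finset ℝ} {a : ℝ} (h : a ∈ S) :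
    cntf x S = cntf x (S.erase a) + if a ≤ x then 1 else 0 := by
  unfold cntf
  rw [Finset.filter_erase]
  by_cases hax : a ≤ x
  · have hmem : a ∈ Finset.filter (fun t => t ≤ x) S := Finset.mem_filter.2 ⟨h, hax⟩
    rw [if_pos hax, Finset.card_erase_of_mem hmem]
    have hpos : 0 < (Finset.filter (fun t => t ≤ x) S).card := Finset.card_pos.2 ⟨a, hmem⟩
    omega
  · have hnm : a ∉ Finset.filter (fun t => t ≤ x) S :=
      fun hc => hax (Finset.mem_filter.1 hc).2
    rw [if_neg hax, Finset.erase_eq_of_notMem hnm]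
    omega

lemma forgetStep_subset_mono {A B : Finset ℝ} (hB : B.Nonempty) (hBA : B ⊆ A) (y : ℝ) :
    forgetStep B y ⊆ forgetStep A y := by
  have hA : A.Nonempty := hB.mono hBA
  have hab : A.min' hA ≤ B.min' hB := Finset.min'_le _ _ (hBA (B.min'_mem hB))
  rw [forgetStep_eq B hB, forgetStep_eq A hA]
  split_ifs with h1 h2 h2
  · -- both delete
    intro t ht
    rcases Finset.mem_insert.1 ht with rfl | ht
    · exact Finset.mem_insert_self _ _
    · have htB := Finset.mem_of_mem_erase ht
      have htne : t ≠ B.min' hB := Finset.ne_of_mem_erase ht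
      refine Finset.mem_insert_of_mem (Finset.mem_erase.2 ⟨?_, hBA htB⟩)
      intro hEq
      refine htne (le_antisymm ?_ (Finset.min'_le _ _ htB))
      rw [hEq]; exact hab
  · exact absurd (lt_of_le_of_lt hab h1) h2
  · -- A deletes, B does not : y ≤ B.min'
    intro t ht
    rcases Finset.mem_insert.1 ht with rfl | htB
    · exact Finset.mem_insert_self _ _
    · refine Finset.mem_insert_of_mem (Finset.mem_erase.2 ⟨?_, hBA htB⟩)
      intro hEq
      have h3 : B.min' hB ≤ t := Finset.min'_le _ _ htB
      rw [hEq] at h3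
      exact absurd (lt_of_lt_of_le h2 (le_of_not_gt h1)) (not_lt.2 h3)
  · exact Finset.insert_subset_insert _ hBA

lemma cnt_step {T A B : Finset ℝ} (hB : B.Nonempty) (hBA : B ⊆ A)
    (hc : cntf x A ≤ cntf x T + cntf x B) (y : ℝ) :
    cntf x (forgetStep A y) ≤ cntf x T + cntf x (forgetStep B y) := by
  have hA : A.Nonempty := hB.mono hBA
  set a := A.min' hA with ha
  set b := B.min' hB with hb
  have hab : a ≤ b := Finset.min'_le _ _ (hBA (B.min'_mem hB))
  have haA : a ∈ A := A.min'_mem hA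
  have hbB : b ∈ B := B.min'_mem hB
  have hiba : (if b ≤ x then 1 else 0) ≤ if a ≤ x then (1:ℕ) else 0 := by
    split_ifs with h1 h2 <;> try omega
    exact absurd (hab.trans h1) h2
  have hEA := cnt_erase (x := x) haA
  have hEB := cnt_erase (x := x) hbB
  have hcore : cntf x (A.erase a) ≤ cntf x T + cntf x (B.erase b) := by omega
  rw [forgetStep_eq A hA, forgetStep_eq B hB, ← ha, ← hb]
  split_ifs with hay hby hby
  · -- both delete
    by_cases hyB : y ∈ B.erase b
    · have hyA : y ∈ A.erase a :=
        Finset.mem_erase.2 ⟨ne_of_gt hay, hBA (Finset.mem_of_mem_erase hyB)⟩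
      rw [cnt_insert_mem hyA, cnt_insert_mem hyB]
      exact hcore
    · rw [cnt_insert_not_mem hyB]
      have := cnt_insert_le (x := x) (A.erase a) y
      omega
  · -- A deletes only
    by_cases hyB : y ∈ B
    · have hyA : y ∈ A.erase a := Finset.mem_erase.2 ⟨ne_of_gt hay, hBA hyB⟩
      rw [cnt_insert_mem hyA, cnt_insert_mem hyB]
      have h4 : cntf x (A.erase a) ≤ cntf x A := cnt_mono (Finset.erase_subset _ _)
      omega
    · rw [cnt_insert_not_mem hyB]
      have h3 := cnt_insert_le (x := x) (A.erase a) y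
      have h4 : cntf x (A.erase a) ≤ cntf x A := cnt_mono (Finset.erase_subset _ _)
      omega
  · exact absurd (lt_of_le_of_lt hab hby) hay
  · -- no deletes
    by_cases hyB : y ∈ B
    · rw [cnt_insert_mem (hBA hyB), cnt_insert_mem hyB]
      exact hc
    · rw [cnt_insert_not_mem hyB]
      have := cnt_insert_le (x := x) A y
      omega

lemma forgetMem_add (T : Finset ℝ) (xs : ℕ → ℝ) (p k : ℕ) :
    forgetMem T xs (p + k) = forgetMem (forgetMem T xs p) (fun i => xs (p + i)) k := by
  induction k with
  | zero => rfl
  | succ k ih => rw [← Nat.add_assoc]; simp only [forgetMem, ih]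

lemma sCount_subadd (xs : ℕ → ℝ) (x : ℝ) (p q : ℕ) (hp : 0 < xs p) :
    sCount xs x (p + q) ≤ sCount xs x p + sCount (fun i => xs (p + i)) x q := by
  set ys : ℕ → ℝ := fun i => xs (p + i) with hys
  have hp' : 0 < ys 0 := by show 0 < xs (p + 0); simpa using hp
  set T : Finset ℝ := forgetMem {0} xs p with hT
  have hTne : T.Nonempty := forgetMem_nonempty _ ⟨0, Finset.mem_singleton_self 0⟩ _ _
  show cntf x (forgetMem {0} xs (p+q)) ≤ cntf x (forgetMem {0} xs p) + cntf x (forgetMem {0} ys q)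
  rw [forgetMem_add, ← hT, ← hys]
  have hB1 : forgetMem {0} ys 1 = {ys 0} := by
    show forgetStep {0} (ys 0) = {ys 0}
    rw [forgetStep_eq _ ⟨0, Finset.mem_singleton_self 0⟩]
    simp only [Finset.min'_singleton]
    rw [if_pos hp']
    simp
  cases q with
  | zero => show cntf x T ≤ cntf x T + cntf x {0}; omega
  | succ q =>
    have key : ∀ k, (forgetMem {0} ys (k+1)) ⊆ (forgetMem T ys (k+1)) ∧
        cntf x (forgetMem T ys (k+1)) ≤ cntf x T + cntf x (forgetMem {0} ys (k+1)) := by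
      intro k
      induction k with
      | zero =>
        constructor
        · rw [hB1]
          have hy : ys 0 ∈ forgetMem T ys 1 := by
            show ys 0 ∈ forgetStep T (ys 0)
            rw [forgetStep_eq _ hTne]
            split_ifs <;> exact Finset.mem_insert_self _ _
          exact Finset.singleton_subset_iff.2 hy
        · show cntf x (forgetStep T (ys 0)) ≤ _
          rw [forgetStep_eq _ hTne, hB1]
          have hsing : cntf x {ys 0} = if ys 0 ≤ x then 1 else 0 := by
            unfold cntf
            rw [Finset.filter_singleton]; split_ifs <;> simp
          split_ifs with h1
          · have h2 := cnt_insert_le (x := x) (T.erase (T.min' hTne)) (ys 0)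
            have h3 : cntf x (T.erase (T.min' hTne)) ≤ cntf x T :=
              cnt_mono (Finset.erase_subset _ _)
            omega
          · have h2 := cnt_insert_le (x := x) T (ys 0)
            omega
      | succ k ih =>
        obtain ⟨hsub, hcnt⟩ := ih
        have hBne : (forgetMem {0} ys (k+1)).Nonempty :=
          forgetMem_nonempty _ ⟨0, Finset.mem_singleton_self 0⟩ _ _
        exact ⟨forgetStep_subset_mono hBne hsub _, cnt_step hBne hsub hcnt _⟩
    exact (key q).2

end Det

section Meas

open scoped Classical

/-- the minimum of the memory (always nonempty when started from `{0}`). -/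
noncomputable def minv (n : ℕ) (v : ℕ → ℝ) : ℝ :=
  (forgetMem {0} v n).min' (forgetMem_nonempty _ ⟨0, Finset.mem_singleton_self 0⟩ v n)

lemma minv_mem (n : ℕ) (v : ℕ → ℝ) : minv n v ∈ forgetMem {0} v n :=
  Finset.min'_mem _ _

lemma minv_le {n : ℕ} {v : ℕ → ℝ} {t : ℝ} (ht : t ∈ forgetMem {0} v n) : minv n v ≤ t :=
  Finset.min'_le _ _ ht

lemma mem_forgetStep_iff {S : Finset ℝ} (h : S.Nonempty) (y t : ℝ) :
    t ∈ forgetStep S y ↔ t = y ∨ (t ∈ S ∧ (S.min' h < y → t ≠ S.min' h)) := by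
  rw [forgetStep_eq S h]
  split_ifs with h1
  · simp only [Finset.mem_insert, Finset.mem_erase]
    constructor
    · rintro (rfl | ⟨hne, hmem⟩)
      · exact Or.inl rfl
      · exact Or.inr ⟨hmem, fun _ => hne⟩
    · rintro (rfl | ⟨hmem, himp⟩)
      · exact Or.inl rfl
      · exact Or.inr ⟨himp h1, hmem⟩
  · simp only [Finset.mem_insert]
    constructor
    · rintro (rfl | hmem)
      · exact Or.inl rfl
      · exact Or.inr ⟨hmem, fun hc => absurd hc h1⟩
    · rintro (rfl | ⟨hmem, _⟩)
      · exact Or.inl rfl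
      · exact Or.inr hmem

lemma mem_forgetMem_succ_iff (n : ℕ) (v : ℕ → ℝ) (t : ℝ) :
    t ∈ forgetMem {0} v (n + 1) ↔
      t = v n ∨ (t ∈ forgetMem {0} v n ∧ (minv n v < v n → t ≠ minv n v)) :=
  mem_forgetStep_iff _ _ _

lemma forgetMem_subset_range (n : ℕ) (v : ℕ → ℝ) :
    forgetMem {0} v n ⊆ insert 0 ((Finset.range n).image v) := by
  induction n with
  | zero => simp [forgetMem]
  | succ n ih =>
    intro t ht
    rcases (mem_forgetMem_succ_iff n v t).1 ht with rfl | ⟨htm, _⟩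
    · exact Finset.mem_insert_of_mem (Finset.mem_image.2 ⟨n, Finset.mem_range.2 (Nat.lt_succ_self n), rfl⟩)
    · rcases Finset.mem_insert.1 (ih htm) with h0 | him
      · exact Finset.mem_insert.2 (Or.inl h0)
      · obtain ⟨j, hj, rfl⟩ := Finset.mem_image.1 him
        exact Finset.mem_insert_of_mem (Finset.mem_image.2
          ⟨j, Finset.mem_range.2 ((Finset.mem_range.1 hj).trans (Nat.lt_succ_self n)), rfl⟩)

lemma minv_le_iff (n : ℕ) (v : ℕ → ℝ) (c : ℝ) :
    minv n v ≤ c ↔ ((0:ℝ) ∈ forgetMem {0} v n ∧ 0 ≤ c) ∨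
      ∃ j ∈ Finset.range n, v j ∈ forgetMem {0} v n ∧ v j ≤ c := by
  constructor
  · intro hle
    have hm := minv_mem n v
    rcases Finset.mem_insert.1 (forgetMem_subset_range n v hm) with h0 | him
    · exact Or.inl ⟨h0 ▸ hm, h0 ▸ hle⟩
    · obtain ⟨j, hj, hji⟩ := Finset.mem_image.1 him
      exact Or.inr ⟨j, hj, hji.symm ▸ hm, hji.symm ▸ hle⟩
  · rintro (⟨hmem, hc⟩ | ⟨j, _, hmem, hc⟩)
    · exact (minv_le hmem).trans hc
    · exact (minv_le hmem).trans hc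

lemma measurable_mem_and_min (n : ℕ) :
    (∀ h : (ℕ → ℝ) → ℝ, Measurable h →
      MeasurableSet {v : ℕ → ℝ | h v ∈ forgetMem {0} v n}) ∧ Measurable (minv n) := by
  induction n with
  | zero =>
    constructor
    · intro h hh
      have : {v : ℕ → ℝ | h v ∈ forgetMem {0} v 0} = {v | h v = 0} := by
        ext v; simp [forgetMem]
      rw [this]
      exact measurableSet_eq_fun hh measurable_const
    · have : minv 0 = fun _ : ℕ → ℝ => (0:ℝ) := by
        funext v
        simp [minv, forgetMem]
      rw [this]; exact measurable_const
  | succ n ih =>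
    obtain ⟨ihmem, ihmin⟩ := ih
    have hev : ∀ j : ℕ, Measurable fun v : ℕ → ℝ => v j := fun j => measurable_pi_apply j
    have hmem : ∀ h : (ℕ → ℝ) → ℝ, Measurable h →
        MeasurableSet {v : ℕ → ℝ | h v ∈ forgetMem {0} v (n+1)} := by
      intro h hh
      have hset : {v : ℕ → ℝ | h v ∈ forgetMem {0} v (n+1)} =
          {v | h v = v n} ∪ ({v | h v ∈ forgetMem {0} v n} ∩
            ({v | ¬ minv n v < v n} ∪ {v | ¬ h v = minv n v})) := by
        ext v
        simp only [Set.mem_setOf_eq, Set.mem_union, Set.mem_inter_iff,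
          mem_forgetMem_succ_iff n v (h v)]
        constructor
        · rintro (h1 | ⟨h1, h2⟩)
          · exact Or.inl h1
          · by_cases hlt : minv n v < v n
            · exact Or.inr ⟨h1, Or.inr (h2 hlt)⟩
            · exact Or.inr ⟨h1, Or.inl hlt⟩
        · rintro (h1 | ⟨h1, h2 | h2⟩)
          · exact Or.inl h1
          · exact Or.inr ⟨h1, fun hc => absurd hc h2⟩
          · exact Or.inr ⟨h1, fun _ => h2⟩
      rw [hset]
      exact ((measurableSet_eq_fun hh (hev n))).union
        ((ihmem h hh).inter (((measurableSet_lt ihmin (hev n)).compl).union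
          (measurableSet_eq_fun hh ihmin).compl))
    refine ⟨hmem, measurable_of_Iic fun c => ?_⟩
    have hset : minv (n+1) ⁻¹' Set.Iic c =
        ({v : ℕ → ℝ | (0:ℝ) ∈ forgetMem {0} v (n+1)} ∩ {v | (0:ℝ) ≤ c}) ∪
          ⋃ j ∈ Finset.range (n+1),
            ({v : ℕ → ℝ | v j ∈ forgetMem {0} v (n+1)} ∩ {v | v j ≤ c}) := by
      ext v
      simp only [Set.mem_preimage, Set.mem_Iic, Set.mem_union, Set.mem_inter_iff,
        Set.mem_setOf_eq, Set.mem_iUnion, exists_prop]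
      rw [minv_le_iff]
    rw [hset]
    refine ((hmem _ measurable_const).inter ?_).union
      (MeasurableSet.biUnion (Finset.range (n+1)).countable_toSet fun j _ =>
        (hmem _ (hev j)).inter ((hev j) measurableSet_Iic))
    by_cases h0c : (0:ℝ) ≤ c
    · have : {v : ℕ → ℝ | (0:ℝ) ≤ c} = Set.univ := by ext; simp [h0c]
      rw [this]; exact MeasurableSet.univ
    · have : {v : ℕ → ℝ | (0:ℝ) ≤ c} = ∅ := by ext; simp [h0c]
      rw [this]; exact MeasurableSet.empty

lemma measurable_sum_forgetMem (n : ℕ) (f : ℝ → ℝ) (hf : Measurable f) :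
    Measurable (fun v : ℕ → ℝ => ∑ t ∈ forgetMem {0} v n, f t) := by
  induction n with
  | zero =>
    have : (fun v : ℕ → ℝ => ∑ t ∈ forgetMem {0} v 0, f t) = fun _ => f 0 := by
      funext v; simp [forgetMem]
    rw [this]; exact measurable_const
  | succ n ih =>
    obtain ⟨hmem, hmin⟩ := measurable_mem_and_min n
    have hev : Measurable fun v : ℕ → ℝ => v n := measurable_pi_apply n
    have hform : ∀ v : ℕ → ℝ,
        ∑ t ∈ forgetMem {0} v (n+1), f t =
          if minv n v < v n then
            (if v n ∈ forgetMem {0} v n ∧ ¬ v n = minv n v then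
              (∑ t ∈ forgetMem {0} v n, f t) - f (minv n v)
            else (∑ t ∈ forgetMem {0} v n, f t) - f (minv n v) + f (v n))
          else
            (if v n ∈ forgetMem {0} v n then ∑ t ∈ forgetMem {0} v n, f t
            else (∑ t ∈ forgetMem {0} v n, f t) + f (v n)) := by
      intro v
      have hne : (forgetMem {0} v n).Nonempty :=
        forgetMem_nonempty _ ⟨0, Finset.mem_singleton_self 0⟩ v n
      show ∑ t ∈ forgetStep (forgetMem {0} v n) (v n), f t = _
      rw [forgetStep_eq _ hne]
      have hmv : (forgetMem {0} v n).min' hne = minv n v := rfl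
      rw [hmv]
      have herase : ∑ t ∈ (forgetMem {0} v n).erase (minv n v), f t =
          (∑ t ∈ forgetMem {0} v n, f t) - f (minv n v) :=
        Finset.sum_erase_eq_sub (minv_mem n v)
      split_ifs with h1 h2 h3
      · rw [Finset.sum_insert_of_eq_zero_if_notMem]
        · rw [herase]
        · intro hnm
          exact absurd (Finset.mem_erase.2 ⟨h2.2, h2.1⟩) hnm
      · have hnot : v n ∉ (forgetMem {0} v n).erase (minv n v) := fun hc =>
          h2 ⟨Finset.mem_of_mem_erase hc, Finset.ne_of_mem_erase hc⟩
        rw [Finset.sum_insert hnot, herase]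
        ring
      · rw [Finset.insert_eq_self.2 h3]
      · rw [Finset.sum_insert h3]
        ring
    have : (fun v : ℕ → ℝ => ∑ t ∈ forgetMem {0} v (n+1), f t) =
        fun v : ℕ → ℝ =>
          if minv n v < v n then
            (if v n ∈ forgetMem {0} v n ∧ ¬ v n = minv n v then
              (∑ t ∈ forgetMem {0} v n, f t) - f (minv n v)
            else (∑ t ∈ forgetMem {0} v n, f t) - f (minv n v) + f (v n))
          else
            (if v n ∈ forgetMem {0} v n then ∑ t ∈ forgetMem {0} v n, f t
            else (∑ t ∈ forgetMem {0} v n, f t) + f (v n)) := funext hform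
    rw [this]
    have hA : Measurable fun v : ℕ → ℝ =>
        (∑ t ∈ forgetMem {0} v n, f t) - f (minv n v) := ih.sub (hf.comp hmin)
    have hcond1 : MeasurableSet {v : ℕ → ℝ | minv n v < v n} := measurableSet_lt hmin hev
    have hcond2 : MeasurableSet {v : ℕ → ℝ | v n ∈ forgetMem {0} v n ∧ ¬ v n = minv n v} := by
      have := (hmem _ hev).inter (measurableSet_eq_fun hev hmin).compl
      exact this
    have hcond3 : MeasurableSet {v : ℕ → ℝ | v n ∈ forgetMem {0} v n} := hmem _ hev
    exact Measurable.ite hcond1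
      (Measurable.ite hcond2 hA (hA.add (hf.comp hev)))
      (Measurable.ite hcond3 ih (ih.add (hf.comp hev)))

lemma measurable_sCount (x : ℝ) (n : ℕ) :
    Measurable (fun v : ℕ → ℝ => (sCount v x n : ℝ)) := by
  have hrw : (fun v : ℕ → ℝ => (sCount v x n : ℝ)) =
      fun v : ℕ → ℝ => ∑ t ∈ forgetMem {0} v n, (if t ≤ x then (1:ℝ) else 0) := by
    funext v
    unfold sCount
    rw [Finset.card_filter]
    push_cast
    rfl
  rw [hrw]
  exact measurable_sum_forgetMem n _ (Measurable.ite measurableSet_Iic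
    measurable_const measurable_const)

lemma sCount_le (v : ℕ → ℝ) (x : ℝ) (n : ℕ) : sCount v x n ≤ n + 1 := by
  have hcard : ∀ m, (forgetMem {0} v m).card ≤ m + 1 := by
    intro m
    induction m with
    | zero => simp [forgetMem]
    | succ m ih =>
      calc (forgetMem {0} v (m+1)).card = (forgetStep (forgetMem {0} v m) (v m)).card := rfl
        _ ≤ (forgetMem {0} v m).card + 1 := by
            unfold forgetStep
            split_ifs
            · exact (Finset.card_insert_le _ _).trans
                (Nat.add_le_add_right (Finset.card_le_card (Finset.erase_subset _ _)) 1)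
            · exact Finset.card_insert_le _ _
            · exact Finset.card_insert_le _ _
        _ ≤ (m + 1) + 1 := Nat.add_le_add_right ih 1
  exact le_trans (Finset.card_le_card (Finset.filter_subset _ _)) (hcard n)

lemma forgetMem_congr (T : Finset ℝ) (xs xs' : ℕ → ℝ) (n : ℕ)
    (h : ∀ i < n, xs i = xs' i) : forgetMem T xs n = forgetMem T xs' n := by
  induction n with
  | zero => rfl
  | succ n ih =>
    show forgetStep (forgetMem T xs n) (xs n) = forgetStep (forgetMem T xs' n) (xs' n)
    rw [ih fun i hi => h i (hi.trans (Nat.lt_succ_self n)), h n (Nat.lt_succ_self n)]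

lemma sCount_congr (xs xs' : ℕ → ℝ) (x : ℝ) (n : ℕ) (h : ∀ i < n, xs i = xs' i) :
    sCount xs x n = sCount xs' x n := by
  unfold sCount
  rw [forgetMem_congr _ _ _ _ h]

end Meas

section Prob

open MeasureTheory ProbabilityTheory

/-- the uniform measure on `[0,1]`. -/
noncomputable def unifI : Measure ℝ := volume.restrict (Set.Icc (0:ℝ) 1)

instance : IsProbabilityMeasure unifI := by
  constructor
  rw [unifI, Measure.restrict_apply_univ, Real.volume_Icc]
  norm_num

/-- `sCount` at time `n` as a function of the first `n` inputs. -/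
noncomputable def Fn (x : ℝ) (n : ℕ) (u : Fin n → ℝ) : ℝ :=
  (sCount (fun i => if h : i < n then u ⟨i, h⟩ else 0) x n : ℝ)

lemma measurable_Fn (x : ℝ) (n : ℕ) : Measurable (Fn x n) := by
  have hext : Measurable (fun u : Fin n → ℝ => (fun i : ℕ => if h : i < n then u ⟨i, h⟩ else 0)) := by
    refine measurable_pi_lambda _ fun i => ?_
    by_cases h : i < n
    · simp only [dif_pos h]; exact measurable_pi_apply _
    · simp only [dif_neg h]; exact measurable_const
  exact (measurable_sCount x n).comp hext

lemma Fn_eq (x : ℝ) (n : ℕ) (v : ℕ → ℝ) :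
    Fn x n (fun i : Fin n => v i) = (sCount v x n : ℝ) := by
  unfold Fn
  have := sCount_congr (fun i : ℕ => if h : i < n then v i else 0) v x n
    (fun i hi => by simp [hi])
  exact_mod_cast congrArg (Nat.cast : ℕ → ℝ) this

variable {Ω : Type*} [MeasurableSpace Ω] (μ : Measure Ω) [IsProbabilityMeasure μ]
  (X : ℕ → Ω → ℝ)

lemma map_vec (hX : IsUnifIID μ X) (n : ℕ) (jf : ℕ → ℕ) (hj : Function.Injective jf) :
    Measure.map (fun ω (i : Fin n) => X (jf i) ω) μ =
      Measure.pi (fun _ : Fin n => unifI) := by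
  obtain ⟨hm, hind, hlaw⟩ := hX
  refine (Measure.pi_eq fun s hs => ?_).symm
  rw [Measure.map_apply (measurable_pi_lambda (fun ω (i : Fin n) => X (jf i) ω)
    (fun i => hm (jf i))) (MeasurableSet.univ_pi hs)]
  classical
  set sets : ℕ → Set ℝ := Function.extend (fun i : Fin n => jf i) s (fun _ => Set.univ)
    with hsets
  have hjF : Function.Injective (fun i : Fin n => jf i) := fun a b h =>
    Fin.ext (hj h)
  have hsets_j : ∀ i : Fin n, sets (jf i) = s i := fun i => hjF.extend_apply _ _ _
  have hpre : (fun ω (i : Fin n) => X (jf i) ω) ⁻¹' (Set.univ.pi s) =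
      ⋂ k ∈ Finset.image (fun i : Fin n => jf i) Finset.univ, X k ⁻¹' sets k := by
    rw [Finset.set_biInter_finset_image]
    ext ω
    simp only [Set.mem_preimage, Set.mem_pi, Set.mem_univ, true_implies, Set.mem_iInter,
      Finset.mem_univ, hsets_j]
  rw [hpre]
  have hmeas_sets : ∀ k ∈ Finset.image (fun i : Fin n => jf i) Finset.univ,
      MeasurableSet (sets k) := by
    intro k hk
    obtain ⟨i, _, rfl⟩ := Finset.mem_image.1 hk
    rw [hsets_j]; exact hs i
  rw [(ProbabilityTheory.iIndepFun_iff_measure_inter_preimage_eq_mul.1 hind) _ hmeas_sets]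
  rw [Finset.prod_image (fun a _ b _ h => hjF h)]
  refine Finset.prod_congr rfl fun i _ => ?_
  rw [hsets_j, ← Measure.map_apply (hm (jf i)) (hs i), hlaw (jf i)]
  rfl

lemma integral_sCount_transfer (hX : IsUnifIID μ X) (x : ℝ) (n : ℕ) (jf : ℕ → ℕ)
    (hj : Function.Injective jf) :
    ∫ ω, (sCount (fun i => X (jf i) ω) x n : ℝ) ∂μ =
      ∫ u, Fn x n u ∂(Measure.pi (fun _ : Fin n => unifI)) := by
  have hV : Measurable (fun ω => (fun i : Fin n => X (jf i) ω)) :=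
    measurable_pi_lambda _ fun i => hX.1 (jf i)
  have hmap := map_vec μ X hX n jf hj
  calc ∫ ω, (sCount (fun i => X (jf i) ω) x n : ℝ) ∂μ
      = ∫ ω, Fn x n (fun i : Fin n => X (jf i) ω) ∂μ := by
        refine integral_congr_ae (Filter.Eventually.of_forall fun ω => ?_)
        exact (Fn_eq x n (fun k => X (jf k) ω)).symm
    _ = ∫ u, Fn x n u ∂(Measure.map (fun ω (i : Fin n) => X (jf i) ω) μ) :=
        (integral_map hV.aemeasurable (measurable_Fn x n).aestronglyMeasurable).symm
    _ = ∫ u, Fn x n u ∂(Measure.pi (fun _ : Fin n => unifI)) := by rw [hmap]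

lemma integrable_sCount (hX : IsUnifIID μ X) (x : ℝ) (n : ℕ) (jf : ℕ → ℕ) :
    Integrable (fun ω => (sCount (fun i => X (jf i) ω) x n : ℝ)) μ := by
  have hV : Measurable (fun ω => (fun i : Fin n => X (jf i) ω)) :=
    measurable_pi_lambda _ fun i => hX.1 (jf i)
  have heq : (fun ω => (sCount (fun i => X (jf i) ω) x n : ℝ)) =
      fun ω => Fn x n (fun i : Fin n => X (jf i) ω) := by
    funext ω; exact (Fn_eq x n (fun k => X (jf k) ω)).symm
  rw [heq]
  refine ⟨((measurable_Fn x n).comp hV).aestronglyMeasurable, ?_⟩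
  refine HasFiniteIntegral.of_bounded (C := (n + 1 : ℝ)) ?_
  refine Filter.Eventually.of_forall fun ω => ?_
  have hFn : Fn x n (fun i : Fin n => X (jf i) ω) = (sCount (fun k => X (jf k) ω) x n : ℝ) :=
    Fn_eq x n (fun k => X (jf k) ω)
  rw [hFn, Real.norm_eq_abs, abs_of_nonneg (by positivity)]
  exact_mod_cast sCount_le _ x n

end Prob

/-- For every threshold `x ∈ [0,1]`, the expected count of memory elements
in `[0,x]` is subadditive in time: `E[s(x,p+q)] ≤ E[s(x,p)] + E[s(x,q)]`. -/
theorem expected_count_subadditive {Ω : Type*} [MeasurableSpace Ω] (μ : Measure Ω)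
    [IsProbabilityMeasure μ] (X : ℕ → Ω → ℝ) (hX : IsUnifIID μ X)
    (x : ℝ) (hx : x ∈ Set.Icc (0 : ℝ) 1) (p q : ℕ) :
    ∫ ω, (sCount (fun i => X i ω) x (p + q) : ℝ) ∂μ ≤
      (∫ ω, (sCount (fun i => X i ω) x p : ℝ) ∂μ) +
        ∫ ω, (sCount (fun i => X i ω) x q : ℝ) ∂μ := by
  obtain ⟨hm, hind, hlaw⟩ := id hX
  have hnull : μ {ω | ¬ 0 < X p ω} = 0 := by
    have hpre : {ω | ¬ 0 < X p ω} = X p ⁻¹' Set.Iic 0 := by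
      ext ω; simp [not_lt]
    rw [hpre, ← Measure.map_apply (hm p) measurableSet_Iic, hlaw p,
      Measure.restrict_apply measurableSet_Iic]
    have hint : Set.Iic (0:ℝ) ∩ Set.Icc 0 1 = {0} := by
      ext t
      simp only [Set.mem_inter_iff, Set.mem_Iic, Set.mem_Icc, Set.mem_singleton_iff]
      constructor
      · rintro ⟨h1, h2, _⟩; exact le_antisymm h1 h2
      · rintro rfl; exact ⟨le_refl 0, le_refl 0, zero_le_one⟩
    rw [hint, Real.volume_singleton]
  have hpos : ∀ᵐ ω ∂μ, 0 < X p ω := ae_iff.2 hnull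
  have hae : (fun ω => (sCount (fun i => X i ω) x (p + q) : ℝ)) ≤ᵐ[μ]
      fun ω => (sCount (fun i => X i ω) x p : ℝ) +
        (sCount (fun i => X (p + i) ω) x q : ℝ) := by
    filter_upwards [hpos] with ω hω
    have h := sCount_subadd (fun i => X i ω) x p q hω
    exact_mod_cast h
  have hint1 : Integrable (fun ω => (sCount (fun i => X i ω) x (p + q) : ℝ)) μ :=
    integrable_sCount μ X hX x (p + q) (fun i => i)
  have hint2 : Integrable (fun ω => (sCount (fun i => X i ω) x p : ℝ)) μ :=
    integrable_sCount μ X hX x p (fun i => i)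
  have hint3 : Integrable (fun ω => (sCount (fun i => X (p + i) ω) x q : ℝ)) μ :=
    integrable_sCount μ X hX x q (fun i => p + i)
  have hint4 : Integrable (fun ω => (sCount (fun i => X i ω) x q : ℝ)) μ :=
    integrable_sCount μ X hX x q (fun i => i)
  have hshift : ∫ ω, (sCount (fun i => X (p + i) ω) x q : ℝ) ∂μ =
      ∫ ω, (sCount (fun i => X i ω) x q : ℝ) ∂μ := by
    have e1 : ∫ ω, (sCount (fun i => X (p + i) ω) x q : ℝ) ∂μ =
        ∫ u, Fn x q u ∂(Measure.pi (fun _ : Fin q => unifI)) :=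
      integral_sCount_transfer μ X hX x q (fun i => p + i) (fun a b h => Nat.add_left_cancel h)
    have e2 : ∫ ω, (sCount (fun i => X i ω) x q : ℝ) ∂μ =
        ∫ u, Fn x q u ∂(Measure.pi (fun _ : Fin q => unifI)) :=
      integral_sCount_transfer μ X hX x q (fun i => i) (fun a b h => h)
    rw [e1, e2]
  calc ∫ ω, (sCount (fun i => X i ω) x (p + q) : ℝ) ∂μ
      ≤ ∫ ω, ((sCount (fun i => X i ω) x p : ℝ) +
          (sCount (fun i => X (p + i) ω) x q : ℝ)) ∂μ :=
        integral_mono_ae hint1 (hint2.add hint3) hae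
    _ = (∫ ω, (sCount (fun i => X i ω) x p : ℝ) ∂μ) +
          ∫ ω, (sCount (fun i => X (p + i) ω) x q : ℝ) ∂μ := integral_add hint2 hint3
    _ = _ := by rw [hshift]
end
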